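/- For all m ≥ 3, the kernel number satisfies 2·k_m = t_{m-3} + t_{m-5} + 1, i.e. k_m = (t_{m-3}+t_{m-5}+1)/2. -/
import Mathlib


/-- Tribonacci numbers, index-shifted so that `trib n` represents t_{n-2}:
`trib 0 = t₋₂ = 0`, `trib 1 = t₋₁ = 1`, `trib 2 = t₀ = 1`, and
`trib (n+3) = trib (n+2) + trib (n+1) + trib n`. -/
def trib : ℕ → ℕ
  | 0 => 0
  | 1 => 1
  | 2 => 1
  | n + 3 => trib (n + 2) + trib (n + 1) + trib n

/-- Kernel numbers: k₀ = 0, k₁ = k₂ = 1, k_m = k_{m-1} + k_{m-2} + k_{m-3} - 1 for m ≥ 3. -/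
def ker : ℕ → ℕ
  | 0 => 0
  | 1 => 1
  | 2 => 1
  | n + 3 => ker (n + 2) + ker (n + 1) + ker n - 1

lemma ker_pos : ∀ n, 1 ≤ ker (n + 1)
  | 0 => by decide
  | 1 => by decide
  | n + 2 => by
    have h1 := ker_pos n
    have h2 : 1 ≤ ker (n + 2) := ker_pos (n + 1)
    show 1 ≤ ker (n + 2) + ker (n + 1) + ker n - 1
    omega

lemma two_mul_ker_aux : ∀ n, 2 * ker (n + 3) = trib (n + 2) + trib n + 1
  | 0 => by decide
  | 1 => by decide
  | 2 => by decide
  | n + 3 => by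
    have h1 := two_mul_ker_aux n
    have h2 : 2 * ker (n + 4) = trib (n + 3) + trib (n + 1) + 1 := two_mul_ker_aux (n + 1)
    have h3 : 2 * ker (n + 5) = trib (n + 4) + trib (n + 2) + 1 := two_mul_ker_aux (n + 2)
    have hp1 : 1 ≤ ker (n + 3) := ker_pos (n + 2)
    have hp2 : 1 ≤ ker (n + 4) := ker_pos (n + 3)
    show 2 * (ker (n + 5) + ker (n + 4) + ker (n + 3) - 1) =
      (trib (n + 4) + trib (n + 3) + trib (n + 2)) + (trib (n + 2) + trib (n + 1) + trib n) + 1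
    omega

/-- For all m ≥ 3, 2·k_m = t_{m-3} + t_{m-5} + 1.
(Here `trib (m-1)` = t_{m-3} and `trib (m-3)` = t_{m-5}.) -/
theorem two_mul_kernel (m : ℕ) (hm : 3 ≤ m) :
    2 * ker m = trib (m - 1) + trib (m - 3) + 1 := by
  obtain ⟨n, rfl⟩ : ∃ n, m = n + 3 := ⟨m - 3, by omega⟩
  simpa using two_mul_ker_aux n
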